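/- Let s > 0 and let P satisfy H1 and H2. For every x₀ > 0 and every γ₀ > 0 there exists a positive solution γ of the Dyson–Schwinger ODE on the half-open interval (0, x₀] with γ(x₀) = γ₀, and every such solution satisfies min(γ_c(x), γ₀) ≤ γ(x) ≤ max(γ_c(x₀), γ₀) for all x ∈ (0, x₀]; that is, every local positive solution can be continued down to x = 0. -/

import Mathlib

open Real MeasureTheory Filter Set
open scoped Topology

noncomputable section

/-- `γ` is a positive solution of the Dyson–Schwinger ODE
`γ'(x) = (γ(x) + γ(x)² − P(x)) / (s·x·γ(x))` on the set `I`. -/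
def IsDSSolution (s : ℝ) (P γ : ℝ → ℝ) (I : Set ℝ) : Prop :=
  (∀ x ∈ I, 0 < γ x) ∧
    ∀ x ∈ I, HasDerivWithinAt γ ((γ x + (γ x) ^ 2 - P x) / (s * x * γ x)) I x

/-- Hypothesis H1: `P` is twice continuously differentiable on `[0,∞)`,
`P 0 = 0`, and `P x > 0` for `x > 0`. -/
def H1 (P : ℝ → ℝ) : Prop :=
  ContDiffOn ℝ 2 P (Set.Ici 0) ∧ P 0 = 0 ∧ ∀ x > (0 : ℝ), 0 < P x

/-- Hypothesis H2: `P` is strictly increasing on `[0,∞)`. -/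
def H2 (P : ℝ → ℝ) : Prop := StrictMonoOn P (Set.Ici 0)

/-- The nullcline `γ_c(x) = (√(1 + 4 P x) − 1)/2`. -/
def gammaC (P : ℝ → ℝ) (x : ℝ) : ℝ := (Real.sqrt (1 + 4 * P x) - 1) / 2

namespace DSaux

/-- The Dyson–Schwinger vector field. -/
def F (s : ℝ) (P : ℝ → ℝ) (t y : ℝ) : ℝ := (y + y ^ 2 - P t) / (s * t * y)

variable {s : ℝ} {P : ℝ → ℝ}

lemma P_nonneg (hP1 : H1 P) {t : ℝ} (ht : 0 ≤ t) : 0 ≤ P t := by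
  rcases eq_or_lt_of_le ht with h | h
  · simp [← h, hP1.2.1]
  · exact (hP1.2.2 t h).le

lemma gammaC_id (hP1 : H1 P) {t : ℝ} (ht : 0 ≤ t) :
    gammaC P t + (gammaC P t) ^ 2 = P t := by
  have h0 : (0:ℝ) ≤ 1 + 4 * P t := by nlinarith [P_nonneg hP1 ht]
  have h : Real.sqrt (1 + 4 * P t) ^ 2 = 1 + 4 * P t := Real.sq_sqrt h0
  unfold gammaC
  linear_combination h / 4

lemma gammaC_nonneg (hP1 : H1 P) {t : ℝ} (ht : 0 ≤ t) : 0 ≤ gammaC P t := by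
  have h0 : (1:ℝ) ≤ 1 + 4 * P t := by nlinarith [P_nonneg hP1 ht]
  have h1 : (1:ℝ) ≤ Real.sqrt (1 + 4 * P t) := by
    calc (1:ℝ) = Real.sqrt 1 := Real.sqrt_one.symm
    _ ≤ _ := Real.sqrt_le_sqrt h0
  unfold gammaC; linarith

lemma gammaC_pos (hP1 : H1 P) {t : ℝ} (ht : 0 < t) : 0 < gammaC P t := by
  have h0 : (1:ℝ) < 1 + 4 * P t := by nlinarith [hP1.2.2 t ht]
  have h1 : (1:ℝ) < Real.sqrt (1 + 4 * P t) := by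
    calc (1:ℝ) = Real.sqrt 1 := Real.sqrt_one.symm
    _ < _ := Real.sqrt_lt_sqrt (by norm_num) h0
  unfold gammaC; linarith

lemma gammaC_mono (hP2 : H2 P) {u v : ℝ} (hu : 0 ≤ u) (hv : 0 ≤ v) (huv : u ≤ v) :
    gammaC P u ≤ gammaC P v := by
  have hP : P u ≤ P v := hP2.monotoneOn hu hv huv
  have := Real.sqrt_le_sqrt (show 1 + 4 * P u ≤ 1 + 4 * P v by linarith)
  unfold gammaC; linarith

lemma F_neg (hs : 0 < s) (hP1 : H1 P) {t u : ℝ} (ht : 0 < t) (hu : 0 < u)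
    (h : u < gammaC P t) : F s P t u < 0 := by
  have hid := gammaC_id hP1 ht.le
  apply div_neg_of_neg_of_pos _ (by positivity)
  nlinarith

lemma F_pos (hs : 0 < s) (hP1 : H1 P) {t u : ℝ} (ht : 0 < t)
    (h : gammaC P t < u) : 0 < F s P t u := by
  have hid := gammaC_id hP1 ht.le
  have hc := gammaC_nonneg hP1 ht.le
  have hu : 0 < u := lt_of_le_of_lt hc h
  apply div_pos _ (by positivity)
  nlinarith

lemma gammaC_continuousOn (hP1 : H1 P) {x₁ x₀ : ℝ} (h1 : 0 < x₁) :
    ContinuousOn (gammaC P) (Icc x₁ x₀) := by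
  have hPc : ContinuousOn P (Icc x₁ x₀) :=
    hP1.1.continuousOn.mono (fun y hy => le_trans h1.le hy.1)
  show ContinuousOn (fun x => (Real.sqrt (1 + 4 * P x) - 1) / 2) _
  exact (((continuousOn_const.add (continuousOn_const.mul hPc)).sqrt).sub
    continuousOn_const).div_const 2

/-- Backward lower barrier: a solution ending at `γ₀` at `x₀` cannot be below
`min (γ_c x) γ₀` anywhere to the left. -/
lemma barrier_low (hP1 : H1 P) (hP2 : H2 P) {x₀ γ₀ : ℝ}
    {f : ℝ → ℝ} {x₁ : ℝ} (h1 : 0 < x₁) (h2 : x₁ ≤ x₀)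
    (hcont : ContinuousOn f (Icc x₁ x₀))
    (hderiv : ∀ y ∈ Ioo x₁ x₀, f y < min (gammaC P y) γ₀ → ∃ d, d < 0 ∧ HasDerivAt f d y)
    (hend : f x₀ = γ₀) :
    min (gammaC P x₁) γ₀ ≤ f x₁ := by
  by_contra hcon
  push_neg at hcon
  have hx1x0 : x₁ < x₀ := by
    rcases eq_or_lt_of_le h2 with h | h
    · exfalso; rw [h, hend] at hcon
      exact absurd (min_le_right (gammaC P x₀) γ₀) (not_le.2 hcon)
    · exact h
  set m : ℝ → ℝ := fun x => min (gammaC P x) γ₀ with hm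
  have hmcont : ContinuousOn m (Icc x₁ x₀) :=
    (gammaC_continuousOn hP1 h1).inf continuousOn_const
  set S : Set ℝ := Icc x₁ x₀ ∩ (fun x => f x - m x) ⁻¹' (Ici 0) with hS
  have hSclosed : IsClosed S :=
    (hcont.sub hmcont).preimage_isClosed_of_isClosed isClosed_Icc isClosed_Ici
  have hx₀S : x₀ ∈ S := by
    refine ⟨⟨h2, le_rfl⟩, ?_⟩
    simp only [mem_preimage, mem_Ici, sub_nonneg, hend, hm]
    exact min_le_right _ _
  have hbdd : BddBelow S := ⟨x₁, fun y hy => hy.1.1⟩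
  set x₂ := sInf S with hx₂
  have hx₂S : x₂ ∈ S := hSclosed.csInf_mem ⟨x₀, hx₀S⟩ hbdd
  have hx₂m : m x₂ ≤ f x₂ := by
    have := hx₂S.2
    simp only [mem_preimage, mem_Ici, sub_nonneg] at this
    exact this
  have hx₁le : x₁ ≤ x₂ := hx₂S.1.1
  have hx₂le : x₂ ≤ x₀ := hx₂S.1.2
  have hx₁lt : x₁ < x₂ := by
    rcases eq_or_lt_of_le hx₁le with h | h
    · exact absurd hx₂m (by rw [← h]; exact not_le.2 hcon)
    · exact h
  have hbelow : ∀ y ∈ Ico x₁ x₂, f y < m y := by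
    intro y hy
    by_contra hge
    push_neg at hge
    have hyS : y ∈ S := ⟨⟨hy.1, le_trans hy.2.le hx₂le⟩, by
      simp only [mem_preimage, mem_Ici, sub_nonneg]; exact hge⟩
    exact absurd (csInf_le hbdd hyS) (not_le.2 hy.2)
  have hanti : StrictAntiOn f (Icc x₁ x₂) := by
    apply strictAntiOn_of_deriv_neg (convex_Icc _ _)
      (hcont.mono (Icc_subset_Icc le_rfl hx₂le))
    intro y hy
    rw [interior_Icc] at hy
    obtain ⟨d, hd, hdd⟩ := hderiv y ⟨hy.1, lt_of_lt_of_le hy.2 hx₂le⟩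
      (hbelow y ⟨hy.1.le, hy.2⟩)
    rw [hdd.deriv]; exact hd
  have hmono : m x₁ ≤ m x₂ := by
    apply min_le_min _ le_rfl
    exact gammaC_mono hP2 h1.le (lt_of_lt_of_le h1 hx₁le).le hx₁le
  have := hanti ⟨le_rfl, hx₁lt.le⟩ ⟨hx₁lt.le, le_rfl⟩ hx₁lt
  linarith

/-- Backward upper barrier. -/
lemma barrier_high (hP1 : H1 P) (hP2 : H2 P) {x₀ γ₀ : ℝ}
    {f : ℝ → ℝ} {x₁ : ℝ} (h1 : 0 < x₁) (h2 : x₁ ≤ x₀)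
    (hcont : ContinuousOn f (Icc x₁ x₀))
    (hderiv : ∀ y ∈ Ioo x₁ x₀, max (gammaC P x₀) γ₀ < f y → ∃ d, 0 < d ∧ HasDerivAt f d y)
    (hend : f x₀ = γ₀) :
    f x₁ ≤ max (gammaC P x₀) γ₀ := by
  by_contra hcon
  push_neg at hcon
  set M := max (gammaC P x₀) γ₀ with hM
  have hx1x0 : x₁ < x₀ := by
    rcases eq_or_lt_of_le h2 with h | h
    · rw [h, hend] at hcon
      exact absurd (le_max_right (gammaC P x₀) γ₀) (not_le.2 hcon)
    · exact h
  set S : Set ℝ := Icc x₁ x₀ ∩ f ⁻¹' (Iic M) with hS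
  have hSclosed : IsClosed S :=
    hcont.preimage_isClosed_of_isClosed isClosed_Icc isClosed_Iic
  have hx₀S : x₀ ∈ S := ⟨⟨h2, le_rfl⟩, by
    simp only [mem_preimage, mem_Iic, hend]; exact le_max_right _ _⟩
  have hbdd : BddBelow S := ⟨x₁, fun y hy => hy.1.1⟩
  set x₂ := sInf S with hx₂
  have hx₂S : x₂ ∈ S := hSclosed.csInf_mem ⟨x₀, hx₀S⟩ hbdd
  have hx₂m : f x₂ ≤ M := hx₂S.2
  have hx₁le : x₁ ≤ x₂ := hx₂S.1.1
  have hx₂le : x₂ ≤ x₀ := hx₂S.1.2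
  have hx₁lt : x₁ < x₂ := by
    rcases eq_or_lt_of_le hx₁le with h | h
    · exact absurd hx₂m (by rw [← h]; exact not_le.2 hcon)
    · exact h
  have habove : ∀ y ∈ Ico x₁ x₂, M < f y := by
    intro y hy
    by_contra hge
    push_neg at hge
    have hyS : y ∈ S := ⟨⟨hy.1, le_trans hy.2.le hx₂le⟩, hge⟩
    exact absurd (csInf_le hbdd hyS) (not_le.2 hy.2)
  have hmono : StrictMonoOn f (Icc x₁ x₂) := by
    apply strictMonoOn_of_deriv_pos (convex_Icc _ _)
      (hcont.mono (Icc_subset_Icc le_rfl hx₂le))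
    intro y hy
    rw [interior_Icc] at hy
    obtain ⟨d, hd, hdd⟩ := hderiv y ⟨hy.1, lt_of_lt_of_le hy.2 hx₂le⟩
      (habove y ⟨hy.1.le, hy.2⟩)
    rw [hdd.deriv]; exact hd
  have := hmono ⟨le_rfl, hx₁lt.le⟩ ⟨hx₁lt.le, le_rfl⟩ hx₁lt
  linarith

/-- Uniform Lipschitz estimate on the vector field on a box. -/
lemma F_lip (hs : 0 < s) (hP1 : H1 P) (hP2 : H2 P) {x₀ a l Mb : ℝ}
    (hx₀ : 0 < x₀) (ha0 : 0 < a) (hax : a ≤ x₀) (hl : 0 < l) :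
    ∀ t ∈ Icc a x₀, ∀ u ∈ Icc l Mb, ∀ v ∈ Icc l Mb,
      |F s P t u - F s P t v| ≤ ((l ^ 2 + P x₀) / (s * a * l ^ 2)) * |u - v| := by
  intro t ht u hu v hv
  have ht0 : 0 < t := lt_of_lt_of_le ha0 ht.1
  have hu0 : 0 < u := lt_of_lt_of_le hl hu.1
  have hv0 : 0 < v := lt_of_lt_of_le hl hv.1
  have hPt0 : 0 ≤ P t := P_nonneg hP1 ht0.le
  have hPt : P t ≤ P x₀ := hP2.monotoneOn ht0.le hx₀.le ht.2
  have key : F s P t u - F s P t v = ((u - v) * (u * v + P t)) / (s * t * (u * v)) := by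
    unfold F
    field_simp
    ring
  rw [key, abs_div, abs_mul, abs_of_pos (show (0:ℝ) < u * v + P t by positivity),
    abs_of_pos (show (0:ℝ) < s * t * (u * v) by positivity)]
  have hfac : (u * v + P t) / (s * t * (u * v)) ≤ (l ^ 2 + P x₀) / (s * a * l ^ 2) := by
    rw [div_le_div_iff₀ (by positivity) (by positivity)]
    have h1 : l ^ 2 ≤ u * v := by
      have := mul_le_mul hu.1 hv.1 hl.le hu0.le
      nlinarith
    have hsa : s * a ≤ s * t := mul_le_mul_of_nonneg_left ht.1 hs.le
    have t1 : s * a * l ^ 2 * (u * v) ≤ s * t * l ^ 2 * (u * v) :=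
      mul_le_mul_of_nonneg_right (mul_le_mul_of_nonneg_right hsa (sq_nonneg l))
        (mul_pos hu0 hv0).le
    have t2 : s * a * l ^ 2 * P t ≤ s * t * (u * v) * P x₀ := by
      apply mul_le_mul _ hPt hPt0 (by positivity)
      exact mul_le_mul hsa h1 (by positivity) (by positivity)
    nlinarith [t1, t2]
  calc |u - v| * (u * v + P t) / (s * t * (u * v))
      = |u - v| * ((u * v + P t) / (s * t * (u * v))) := by ring
    _ ≤ |u - v| * ((l ^ 2 + P x₀) / (s * a * l ^ 2)) :=
        mul_le_mul_of_nonneg_left hfac (abs_nonneg _)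
    _ = _ := mul_comm _ _


/-- Existence of a true, bounded solution on `Icc a x₀` ending at `γ₀`. -/
lemma exists_sol_Icc (hs : 0 < s) (hP1 : H1 P) (hP2 : H2 P) {x₀ γ₀ a : ℝ}
    (hx₀ : 0 < x₀) (hγ₀ : 0 < γ₀) (ha : a ∈ Ioo 0 x₀) :
    ∃ f : ℝ → ℝ, f x₀ = γ₀ ∧
      (∀ x ∈ Icc a x₀, min (gammaC P x) γ₀ ≤ f x ∧ f x ≤ max (gammaC P x₀) γ₀) ∧
      (∀ x ∈ Icc a x₀, HasDerivWithinAt f (F s P x (f x)) (Icc a x₀) x) := by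
  obtain ⟨ha0, hax⟩ := ha
  have hPx₀ : 0 < P x₀ := hP1.2.2 x₀ hx₀
  have hγca : 0 < gammaC P a := gammaC_pos hP1 ha0
  set M : ℝ := max (gammaC P x₀) γ₀ with hM
  set Mb : ℝ := M + 1 with hMb
  set l : ℝ := min (gammaC P a) γ₀ / 2 with hl
  have hl0 : 0 < l := by
    rw [hl]; have := lt_min hγca hγ₀; linarith
  have hlhalf : l < min (gammaC P a) γ₀ := by
    rw [hl]; have := lt_min hγca hγ₀; linarith
  have hγ₀M : γ₀ ≤ M := le_max_right _ _
  have hlM : l < M := lt_of_lt_of_le (lt_of_lt_of_le hlhalf (min_le_right _ _)) hγ₀M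
  have hMMb : M < Mb := by rw [hMb]; linarith
  set cl : ℝ → ℝ := fun y => max l (min y Mb) with hcl
  have hcl_mem : ∀ y, cl y ∈ Icc l Mb := by
    intro y
    exact ⟨le_max_left _ _, max_le (by linarith) (min_le_right _ _)⟩
  have hclL : LipschitzWith 1 cl := (LipschitzWith.id.min_const Mb).const_max l
  have hclLip : ∀ y z : ℝ, |cl y - cl z| ≤ |y - z| := by
    intro y z
    have := hclL.dist_le_mul y z
    simpa [Real.dist_eq] using this
  set G : ℝ → ℝ → ℝ := fun t y => F s P t (cl y) with hG
  set K0 : ℝ := (l ^ 2 + P x₀) / (s * a * l ^ 2) with hK0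
  have hK0nn : 0 ≤ K0 := by rw [hK0]; positivity
  set K : NNReal := Real.toNNReal K0 with hK
  have hKcoe : (K : ℝ) = K0 := Real.coe_toNNReal _ hK0nn
  have hGlip : ∀ t ∈ Icc a x₀, LipschitzWith K (G t) := by
    intro t ht
    apply LipschitzWith.of_dist_le_mul
    intro y z
    rw [Real.dist_eq, Real.dist_eq, hKcoe]
    calc |G t y - G t z| ≤ K0 * |cl y - cl z| :=
          F_lip hs hP1 hP2 hx₀ ha0 hax.le hl0 t ht _ (hcl_mem y) _ (hcl_mem z)
      _ ≤ K0 * |y - z| := mul_le_mul_of_nonneg_left (hclLip y z) hK0nn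
  set C : ℝ := (Mb + Mb ^ 2 + P x₀) / (s * a * l) with hC
  have hMb0 : 0 < Mb := by
    have : 0 < γ₀ := hγ₀
    rw [hMb]; linarith
  have hC0 : 0 ≤ C := by rw [hC]; positivity
  have hGbound : ∀ t ∈ Icc a x₀, ∀ y : ℝ, |G t y| ≤ C := by
    intro t ht y
    have ht0 : 0 < t := lt_of_lt_of_le ha0 ht.1
    have hcy := hcl_mem y
    have hcy0 : 0 < cl y := lt_of_lt_of_le hl0 hcy.1
    have hPt0 : 0 ≤ P t := P_nonneg hP1 ht0.le
    have hPt : P t ≤ P x₀ := hP2.monotoneOn ht0.le hx₀.le ht.2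
    have hnum : |cl y + cl y ^ 2 - P t| ≤ Mb + Mb ^ 2 + P x₀ := by
      rw [abs_le]
      constructor <;> nlinarith [hcy.1, hcy.2, sq_nonneg (cl y), hcy0,
        pow_le_pow_left₀ hcy0.le hcy.2 2]
    have hden : s * a * l ≤ |s * t * cl y| := by
      rw [abs_of_pos (by positivity)]
      have h' : s * a ≤ s * t := mul_le_mul_of_nonneg_left ht.1 hs.le
      exact mul_le_mul h' hcy.1 hl0.le (by positivity)
    have hb0 : 0 ≤ Mb + Mb ^ 2 + P x₀ := le_trans (abs_nonneg _) hnum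
    simp only [hG, hC]
    show |F s P t (cl y)| ≤ _
    rw [F, abs_div]
    exact div_le_div₀ hb0 hnum (by positivity) hden
  set R : ℝ := C * (x₀ - a) + 1 with hR
  have hR0 : 0 ≤ R := by rw [hR]; nlinarith [hC0, hax]
  have hPL : IsPicardLindelof G (tmin := a) (tmax := x₀) ⟨x₀, ⟨hax.le, le_rfl⟩⟩ γ₀
      R.toNNReal 0 C.toNNReal K := by
    refine ⟨?_, ?_, ?_, ?_⟩
    · exact fun t ht => (hGlip t ht).lipschitzOnWith
    · intro y _
      have hcy := hcl_mem y
      have hcy0 : 0 < cl y := lt_of_lt_of_le hl0 hcy.1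
      simp only [hG]
      show ContinuousOn (fun t => (cl y + cl y ^ 2 - P t) / (s * t * cl y)) (Icc a x₀)
      apply ContinuousOn.div
      · exact continuousOn_const.sub (hP1.1.continuousOn.mono
          (fun z hz => le_trans ha0.le hz.1))
      · exact (continuousOn_const.mul continuousOn_id).mul continuousOn_const
      · intro t ht
        have ht0 : 0 < t := lt_of_lt_of_le ha0 ht.1
        positivity
    · intro t ht y _
      rw [Real.norm_eq_abs, Real.coe_toNNReal _ hC0]
      exact hGbound t ht y
    · have : max (x₀ - x₀) (x₀ - a) = x₀ - a := by
        rw [sub_self]; exact max_eq_right (by linarith)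
      simp only [Real.coe_toNNReal _ hC0, NNReal.coe_zero, sub_zero, Real.coe_toNNReal _ hR0]
      rw [this, hR]; linarith
  obtain ⟨f, hf0, hfd⟩ := hPL.exists_eq_forall_mem_Icc_hasDerivWithinAt₀
  have hfc : ContinuousOn f (Icc a x₀) := fun x hx => (hfd x hx).continuousWithinAt
  have hD : ∀ y ∈ Ioo a x₀, HasDerivAt f (G y (f y)) y := fun y hy =>
    (hfd y (Ioo_subset_Icc_self hy)).hasDerivAt (Icc_mem_nhds hy.1 hy.2)
  have hbound : ∀ x ∈ Icc a x₀, min (gammaC P x) γ₀ ≤ f x ∧ f x ≤ M := by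
    intro x hx
    have hx0 : 0 < x := lt_of_lt_of_le ha0 hx.1
    constructor
    · apply barrier_low hP1 hP2 hx0 hx.2 (hfc.mono (Icc_subset_Icc hx.1 le_rfl)) _ hf0
      intro y hy hylt
      have hy0 : 0 < y := lt_trans hx0 hy.1
      have hay : a ≤ y := le_trans hx.1 hy.1.le
      refine ⟨G y (f y), ?_, hD y ⟨lt_of_le_of_lt hx.1 hy.1, hy.2⟩⟩
      have hlly : l < gammaC P y :=
        lt_of_lt_of_le (lt_of_lt_of_le hlhalf (min_le_left _ _))
          (gammaC_mono hP2 ha0.le hy0.le hay)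
      have hfyM : f y < Mb := by
        have h1 : min (gammaC P y) γ₀ ≤ γ₀ := min_le_right _ _
        have := lt_of_lt_of_le hylt h1
        linarith
      have hcleq : cl (f y) = max l (f y) := by
        simp only [hcl]
        rw [min_eq_left hfyM.le]
      have h2 : cl (f y) < gammaC P y := by
        rw [hcleq]
        exact max_lt hlly (lt_of_lt_of_le hylt (min_le_left _ _))
      have h3 : 0 < cl (f y) := lt_of_lt_of_le hl0 (hcl_mem _).1
      simp only [hG]
      exact F_neg hs hP1 hy0 h3 h2
    · apply barrier_high hP1 hP2 hx0 hx.2 (hfc.mono (Icc_subset_Icc hx.1 le_rfl)) _ hf0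
      intro y hy hygt
      have hy0 : 0 < y := lt_trans hx0 hy.1
      refine ⟨G y (f y), ?_, hD y ⟨lt_of_le_of_lt hx.1 hy.1, hy.2⟩⟩
      have h2 : gammaC P y < cl (f y) := by
        have hγy : gammaC P y ≤ M :=
          le_trans (gammaC_mono hP2 hy0.le hx₀.le hy.2.le) (le_max_left _ _)
        have hmin : M < min (f y) Mb := lt_min hygt hMMb
        have : min (f y) Mb ≤ cl (f y) := le_max_right _ _
        linarith
      simp only [hG]
      exact F_pos hs hP1 hy0 h2
  have hcleqf : ∀ x ∈ Icc a x₀, cl (f x) = f x := by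
    intro x hx
    obtain ⟨hb1, hb2⟩ := hbound x hx
    have hx0 : 0 < x := lt_of_lt_of_le ha0 hx.1
    have hlf : l ≤ f x := by
      have : min (gammaC P a) γ₀ ≤ min (gammaC P x) γ₀ :=
        min_le_min (gammaC_mono hP2 ha0.le hx0.le hx.1) le_rfl
      linarith
    have hfMb : f x ≤ Mb := by linarith
    simp only [hcl]
    rw [min_eq_left hfMb, max_eq_right hlf]
  refine ⟨f, hf0, hbound, fun x hx => ?_⟩
  have hd := hfd x hx
  have : G x (f x) = F s P x (f x) := by
    simp only [hG]
    rw [hcleqf x hx]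
  rwa [this] at hd

/-- Uniqueness of bounded solutions on `Icc a x₀`. -/
lemma sol_unique (hs : 0 < s) (hP1 : H1 P) (hP2 : H2 P) {x₀ γ₀ a : ℝ}
    (hx₀ : 0 < x₀) (hγ₀ : 0 < γ₀) (ha : a ∈ Ioo 0 x₀)
    {f g : ℝ → ℝ}
    (hfd : ∀ x ∈ Icc a x₀, HasDerivWithinAt f (F s P x (f x)) (Icc a x₀) x)
    (hfb : ∀ x ∈ Icc a x₀, min (gammaC P x) γ₀ ≤ f x ∧ f x ≤ max (gammaC P x₀) γ₀)
    (hgd : ∀ x ∈ Icc a x₀, HasDerivWithinAt g (F s P x (g x)) (Icc a x₀) x)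
    (hgb : ∀ x ∈ Icc a x₀, min (gammaC P x) γ₀ ≤ g x ∧ g x ≤ max (gammaC P x₀) γ₀)
    (hfg : f x₀ = g x₀) : EqOn f g (Icc a x₀) := by
  obtain ⟨ha0, hax⟩ := ha
  have hγca : 0 < gammaC P a := gammaC_pos hP1 ha0
  set la : ℝ := min (gammaC P a) γ₀ with hla
  have hla0 : 0 < la := lt_min hγca hγ₀
  set M : ℝ := max (gammaC P x₀) γ₀ with hM
  set Scl : ℝ → Set ℝ := fun t => if t ∈ Ioc a x₀ then Icc la M else (∅ : Set ℝ) with hScl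
  have hPx₀ : 0 ≤ P x₀ := P_nonneg hP1 hx₀.le
  have hK0nn : 0 ≤ (la ^ 2 + P x₀) / (s * a * la ^ 2) := by positivity
  set K : NNReal := Real.toNNReal ((la ^ 2 + P x₀) / (s * a * la ^ 2)) with hK
  have hKcoe : (K : ℝ) = (la ^ 2 + P x₀) / (s * a * la ^ 2) :=
    Real.coe_toNNReal _ hK0nn
  have hv : ∀ t, LipschitzOnWith K (F s P t) (Scl t) := by
    intro t
    simp only [hScl]
    split_ifs with h
    · rw [lipschitzOnWith_iff_dist_le_mul]
      intro u hu v hv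
      rw [Real.dist_eq, Real.dist_eq, hKcoe]
      exact F_lip hs hP1 hP2 hx₀ ha0 hax.le hla0 t ⟨h.1.le, h.2⟩ u hu v hv
    · exact lipschitzOnWith_empty _ _
  have hIic : ∀ t ∈ Ioc a x₀, Icc a x₀ ∈ 𝓝[Iic t] t := by
    intro t ht
    exact mem_nhdsWithin.mpr ⟨Ioi a, isOpen_Ioi, ht.1,
      fun y hy => ⟨hy.1.le, le_trans hy.2 ht.2⟩⟩
  have hmem : ∀ (h : ℝ → ℝ),
      (∀ x ∈ Icc a x₀, min (gammaC P x) γ₀ ≤ h x ∧ h x ≤ max (gammaC P x₀) γ₀) →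
      ∀ t ∈ Ioc a x₀, h t ∈ Scl t := by
    intro h hb t ht
    simp only [hScl, if_pos ht]
    obtain ⟨h1, h2⟩ := hb t ⟨ht.1.le, ht.2⟩
    refine ⟨le_trans ?_ h1, h2⟩
    exact min_le_min (gammaC_mono hP2 ha0.le (lt_trans ha0 ht.1).le ht.1.le) le_rfl
  exact ODE_solution_unique_of_mem_Icc_left (fun t _ => hv t)
    (fun x hx => (hfd x hx).continuousWithinAt)
    (fun t ht => ((hfd t ⟨ht.1.le, ht.2⟩).mono_of_mem_nhdsWithin (hIic t ht)))
    (hmem f hfb)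
    (fun x hx => (hgd x hx).continuousWithinAt)
    (fun t ht => ((hgd t ⟨ht.1.le, ht.2⟩).mono_of_mem_nhdsWithin (hIic t ht)))
    (hmem g hgb)
    hfg

end DSaux

open DSaux

theorem stmt_9 (s : ℝ) (hs : 0 < s) (P : ℝ → ℝ) (hP1 : H1 P) (hP2 : H2 P) :
    ∀ x₀ > (0 : ℝ), ∀ γ₀ > (0 : ℝ),
      (∃ γ : ℝ → ℝ, IsDSSolution s P γ (Set.Ioc 0 x₀) ∧ γ x₀ = γ₀) ∧
      ∀ γ : ℝ → ℝ, IsDSSolution s P γ (Set.Ioc 0 x₀) → γ x₀ = γ₀ →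
        ∀ x ∈ Set.Ioc (0 : ℝ) x₀,
          min (gammaC P x) γ₀ ≤ γ x ∧ γ x ≤ max (gammaC P x₀) γ₀ := by
  intro x₀ hx₀ γ₀ hγ₀
  constructor
  · -- existence
    have hex : ∀ a, a ∈ Ioo 0 x₀ → ∃ f : ℝ → ℝ, f x₀ = γ₀ ∧
        (∀ x ∈ Icc a x₀, min (gammaC P x) γ₀ ≤ f x ∧ f x ≤ max (gammaC P x₀) γ₀) ∧
        (∀ x ∈ Icc a x₀, HasDerivWithinAt f (F s P x (f x)) (Icc a x₀) x) :=
      fun a ha => exists_sol_Icc hs hP1 hP2 hx₀ hγ₀ ha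
    choose g hg0 hgb hgd using hex
    have compat : ∀ a (ha : a ∈ Ioo 0 x₀) b (hb : b ∈ Ioo 0 x₀), a ≤ b →
        EqOn (g a ha) (g b hb) (Icc b x₀) := by
      intro a ha b hb hab
      have hsub : Icc b x₀ ⊆ Icc a x₀ := Icc_subset_Icc hab le_rfl
      exact sol_unique hs hP1 hP2 hx₀ hγ₀ hb
        (fun x hx => (hgd a ha x (hsub hx)).mono hsub)
        (fun x hx => hgb a ha x (hsub hx))
        (hgd b hb) (hgb b hb)
        (by rw [hg0 a ha, hg0 b hb])
    set γ : ℝ → ℝ := fun x => if hx : x ∈ Ioc 0 x₀ then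
        g (x/2) ⟨half_pos hx.1, lt_of_lt_of_le (half_lt_self hx.1) hx.2⟩ x else γ₀ with hγdef
    have hγeq : ∀ a (ha : a ∈ Ioo 0 x₀), ∀ x, 2*a ≤ x → x ≤ x₀ → γ x = g a ha x := by
      intro a ha x h2a hxle
      have hx : x ∈ Ioc 0 x₀ := ⟨by linarith [ha.1], hxle⟩
      have e1 : γ x = g (x/2)
          ⟨half_pos hx.1, lt_of_lt_of_le (half_lt_self hx.1) hx.2⟩ x := by
        simp only [hγdef]
        rw [dif_pos hx]
      rw [e1]
      exact (compat a ha (x/2) _ (by linarith) ⟨by linarith [hx.1], hxle⟩).symm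
    refine ⟨γ, ⟨?_, ?_⟩, ?_⟩
    · intro x hx
      have hax : (x/2) ∈ Ioo 0 x₀ :=
        ⟨half_pos hx.1, lt_of_lt_of_le (half_lt_self hx.1) hx.2⟩
      rw [hγeq (x/2) hax x (by linarith) hx.2]
      have hb := (hgb (x/2) hax x ⟨half_le_self hx.1.le, hx.2⟩).1
      have hm : 0 < min (gammaC P x) γ₀ := lt_min (gammaC_pos hP1 hx.1) hγ₀
      linarith
    · intro x hx
      have hax : (x/4) ∈ Ioo 0 x₀ := ⟨by linarith [hx.1], by linarith [hx.1, hx.2]⟩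
      have hxa : x ∈ Icc (x/4) x₀ := ⟨by linarith [hx.1], hx.2⟩
      have hd := hgd (x/4) hax x hxa
      have hmemn : Icc (x/4) x₀ ∈ 𝓝[Ioc 0 x₀] x :=
        mem_nhdsWithin.mpr ⟨Ioi (x/2), isOpen_Ioi, mem_Ioi.mpr (by linarith [hx.1]),
          fun y hy => ⟨by have h1 := mem_Ioi.mp hy.1; linarith [hx.1], hy.2.2⟩⟩
      have hd2 := hd.mono_of_mem_nhdsWithin hmemn
      have hev : γ =ᶠ[𝓝[Ioc 0 x₀] x] g (x/4) hax := by
        filter_upwards [inter_mem (mem_nhdsWithin_of_mem_nhds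
          (Ioi_mem_nhds (by linarith [hx.1] : x/2 < x))) self_mem_nhdsWithin] with y hy
        exact hγeq (x/4) hax y (by have h1 := mem_Ioi.mp hy.1; linarith) hy.2.2
      have hγx : γ x = g (x/4) hax x := hγeq (x/4) hax x (by linarith [hx.1]) hx.2
      have final : HasDerivWithinAt γ (F s P x (g (x/4) hax x)) (Ioc 0 x₀) x :=
        hd2.congr_of_eventuallyEq hev hγx
      rw [← hγx] at final
      exact final
    · have hax : (x₀/2) ∈ Ioo 0 x₀ := ⟨half_pos hx₀, half_lt_self hx₀⟩
      rw [hγeq (x₀/2) hax x₀ (by linarith) le_rfl]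
      exact hg0 _ _
  · intro γ hγ hγx₀ x hx
    obtain ⟨hpos, hder⟩ := hγ
    have hsub : Icc x x₀ ⊆ Ioc 0 x₀ := fun y hy => ⟨lt_of_lt_of_le hx.1 hy.1, hy.2⟩
    have hcont : ContinuousOn γ (Icc x x₀) := fun y hy =>
      ((hder y (hsub hy)).continuousWithinAt).mono hsub
    have hD : ∀ y ∈ Ioo x x₀,
        HasDerivAt γ ((γ y + γ y ^ 2 - P y) / (s * y * γ y)) y := by
      intro y hy
      have hy' : y ∈ Ioc 0 x₀ := ⟨lt_trans hx.1 hy.1, hy.2.le⟩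
      exact (hder y hy').hasDerivAt (mem_nhds_iff.mpr
        ⟨Ioo 0 x₀, fun z hz => ⟨hz.1, hz.2.le⟩, isOpen_Ioo, ⟨hy'.1, hy.2⟩⟩)
    constructor
    · apply barrier_low hP1 hP2 hx.1 hx.2 hcont _ hγx₀
      intro y hy hylt
      refine ⟨_, ?_, hD y hy⟩
      have hy0 : 0 < y := lt_trans hx.1 hy.1
      have h2 : γ y < gammaC P y := lt_of_lt_of_le hylt (min_le_left _ _)
      exact F_neg hs hP1 hy0 (hpos y ⟨hy0, hy.2.le⟩) h2
    · apply barrier_high hP1 hP2 hx.1 hx.2 hcont _ hγx₀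
      intro y hy hygt
      refine ⟨_, ?_, hD y hy⟩
      have hy0 : 0 < y := lt_trans hx.1 hy.1
      have h2 : gammaC P y < γ y :=
        lt_of_le_of_lt (le_trans (gammaC_mono hP2 hy0.le hx₀.le hy.2.le)
          (le_max_left _ _)) hygt
      exact F_pos hs hP1 hy0 h2
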